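/- For the tamed scheme applied to the n-layer neural network: if r ≥ (n+2)/2 and λ ∈ (0,1] is small enough, then the tamed updating function H(θ, y) = ∇_θ U(θ, y) / (1 + √λ |θ|^{2r}), where U(θ, y) = |h(z,θ) − l|² + (η/(2(r+1)))|θ|^{2(r+1)}, satisfies the dissipativity condition ⟨H(θ, y), θ⟩ ≥ (η/2)|θ|² − K'(1 + |y|²) for all θ ∈ ℝ^d and y ∈ ℝ^m, for some constant K' > 0; i.e., Assumption 1 holds with Δ = η/2 and b(y) quadratic in y. -/

import Mathlib

open scoped RealInnerProductSpace

/-- The index set of the parameter θ = (W₁, …, W_n) of an n-layer network with layer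
dimensions dims 0, dims 1, …, dims n : the weight matrix Wᵢ₊₁ ∈ ℝ^{dims (i+1) × dims i}
is indexed by the fiber over i : Fin n. -/
abbrev NetIdx (n : ℕ) (dims : ℕ → ℕ) : Type :=
  (i : Fin n) × (Fin (dims (i.1 + 1)) × Fin (dims i.1))

/-- The forward pass through the first k layers of the network:
a_0 = z, a_{k+1} = s_{k+1}(W_{k+1} a_k). -/
noncomputable def mlForward (n : ℕ) (dims : ℕ → ℕ) (sact : ℕ → ℝ → ℝ)
    (θ : EuclideanSpace ℝ (NetIdx n dims)) (z : EuclideanSpace ℝ (Fin (dims 0))) :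
    (k : ℕ) → Fin (dims k) → ℝ
  | 0 => z
  | (k + 1) => fun j =>
      if hk : k < n then
        sact (k + 1) (∑ i : Fin (dims k), θ ⟨⟨k, hk⟩, (j, i)⟩ * mlForward n dims sact θ z k i)
      else 0

/-- The n-layer network prediction h(z, θ) = s_n(W_n s_{n-1}(⋯ s_1(W_1 z))). -/
noncomputable def mlNet (n : ℕ) (dims : ℕ → ℕ) (sact : ℕ → ℝ → ℝ)
    (θ : EuclideanSpace ℝ (NetIdx n dims)) (z : EuclideanSpace ℝ (Fin (dims 0))) :
    EuclideanSpace ℝ (Fin (dims n)) :=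
  WithLp.toLp 2 (fun j => mlForward n dims sact θ z n j)

/-- The squared loss |h(z,θ) − l|² of the n-layer network, as a function of θ, with
the data point y = (z, l) given in concatenated form. -/
noncomputable def mlLabel (n : ℕ) (dims : ℕ → ℕ)
    (y : EuclideanSpace ℝ (Fin (dims 0) ⊕ Fin (dims n))) :
    EuclideanSpace ℝ (Fin (dims n)) :=
  WithLp.toLp 2 (fun j => y (Sum.inr j))

noncomputable def mlLoss (n : ℕ) (dims : ℕ → ℕ) (sact : ℕ → ℝ → ℝ)
    (y : EuclideanSpace ℝ (Fin (dims 0) ⊕ Fin (dims n)))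
    (θ : EuclideanSpace ℝ (NetIdx n dims)) : ℝ :=
  ‖mlNet n dims sact θ (WithLp.toLp 2 (fun i => y (Sum.inl i))) - mlLabel n dims y‖ ^ 2


/-- The regularized loss U(θ, y) = |h(z,θ) − l|² + (η/(2(r+1)))|θ|^{2(r+1)}. -/
noncomputable def mlRegLoss (n : ℕ) (dims : ℕ → ℕ) (sact : ℕ → ℝ → ℝ) (η r : ℝ)
    (y : EuclideanSpace ℝ (Fin (dims 0) ⊕ Fin (dims n)))
    (θ : EuclideanSpace ℝ (NetIdx n dims)) : ℝ :=
  mlLoss n dims sact y θ + (η / (2 * (r + 1))) * ‖θ‖ ^ (2 * (r + 1))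

/-- The tamed updating function H(θ, y) = ∇_θ U(θ, y) / (1 + √λ |θ|^{2r}). -/
noncomputable def tamedH (n : ℕ) (dims : ℕ → ℕ) (sact : ℕ → ℝ → ℝ) (η r lam : ℝ)
    (θ : EuclideanSpace ℝ (NetIdx n dims))
    (y : EuclideanSpace ℝ (Fin (dims 0) ⊕ Fin (dims n))) :
    EuclideanSpace ℝ (NetIdx n dims) :=
  (1 + Real.sqrt lam * ‖θ‖ ^ (2 * r))⁻¹ • gradient (mlRegLoss n dims sact η r y) θ

section AuxLemmas

variable {E : Type*} [NormedAddCommGroup E] [InnerProductSpace ℝ E] [CompleteSpace E]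

/-- The gradient of `‖x‖ ^ (2p)` (real power) is `(2p * ‖x‖^(2p-2)) • x`. -/
lemma hasGradientAt_rpow_norm (p : ℝ) (hp : 1 ≤ p) (x : E) :
    HasGradientAt (fun y : E => ‖y‖ ^ (2 * p)) ((2 * p * ‖x‖ ^ (2 * p - 2)) • x) x := by
  have hinner : HasFDerivAt (fun y : E => ⟪y, y⟫)
      ((fderivInnerCLM ℝ (x, x)).comp
        ((ContinuousLinearMap.id ℝ E).prod (ContinuousLinearMap.id ℝ E))) x :=
    (hasFDerivAt_id x).inner ℝ (hasFDerivAt_id x)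
  have hpow : HasDerivAt (fun t : ℝ => t ^ p) (p * ⟪x, x⟫ ^ (p - 1)) ⟪x, x⟫ :=
    Real.hasDerivAt_rpow_const (Or.inr hp)
  have hcomp := hpow.comp_hasFDerivAt_of_eq x hinner rfl
  have hfun : (fun y : E => ‖y‖ ^ (2 * p)) = (fun t : ℝ => t ^ p) ∘ fun y : E => ⟪y, y⟫ := by
    funext y
    have h1 : ⟪y, y⟫ = ‖y‖ ^ (2 : ℝ) := by
      rw [real_inner_self_eq_norm_sq, ← Real.rpow_natCast ‖y‖ 2]; norm_num
    simp only [Function.comp_apply, h1, ← Real.rpow_mul (norm_nonneg y)]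
  rw [hasGradientAt_iff_hasFDerivAt, hfun]
  refine hcomp.congr_fderiv ?_
  ext w
  have h1 : ⟪x, x⟫ = ‖x‖ ^ (2 : ℝ) := by
    rw [real_inner_self_eq_norm_sq, ← Real.rpow_natCast ‖x‖ 2]; norm_num
  simp only [InnerProductSpace.toDual_apply_apply, ContinuousLinearMap.comp_apply,
    ContinuousLinearMap.prod_apply, ContinuousLinearMap.id_apply, fderivInnerCLM_apply,
    ContinuousLinearMap.smul_apply, smul_eq_mul, real_inner_smul_left]
  rw [h1, ← Real.rpow_mul (norm_nonneg x), real_inner_comm w x]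
  ring_nf

/-- Monotone exponent bound: `ρ^a ≤ 1 + ρ^b` for `0 ≤ a ≤ b`, `0 ≤ ρ` (real powers). -/
lemma rpow_le_one_add_rpow (ρ : ℝ) (hρ : 0 ≤ ρ) {a b : ℝ} (ha : 0 ≤ a) (hab : a ≤ b) :
    ρ ^ a ≤ 1 + ρ ^ b := by
  rcases le_or_gt ρ 1 with h | h
  · have h1 : ρ ^ a ≤ 1 := Real.rpow_le_one hρ h ha
    have h2 : 0 ≤ ρ ^ b := Real.rpow_nonneg hρ b
    linarith
  · have h1 : ρ ^ a ≤ ρ ^ b := Real.rpow_le_rpow_of_exponent_le h.le hab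
    have h2 : 0 ≤ ρ ^ a := Real.rpow_nonneg hρ a
    linarith

end AuxLemmas

/-- The purely scalar dissipativity estimate. -/
lemma dissipativity_scalar (C η s w ρ P X G : ℝ) (hC : 0 < C) (hη : 0 < η)
    (hs0 : 0 < s) (hs1 : s ≤ 1) (hw0 : 0 ≤ w) (hρ0 : 0 ≤ ρ) (hP0 : 0 ≤ P) (hX0 : 0 ≤ X)
    (hρa : ρ ≤ 1 + P) (hρb : X * ρ ≤ 1 + P) (hρc : ρ ^ 2 ≤ 1 + P * ρ ^ 2)
    (hG : -(C * (1 + w) ^ 2 * (1 + X) * ρ) ≤ G) :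
    ((η / 2) * ρ ^ 2 - (4 * C / s + η / 2) * (1 + w ^ 2)) * (1 + s * P)
      ≤ G + η * P * ρ ^ 2 := by
  have f2' : (η / 2) * ρ ^ 2 ≤ (η / 2) * (1 + P * ρ ^ 2) := by nlinarith
  have f3 : (1 + X) * ρ ≤ 2 * (1 + P) := by nlinarith
  have f4 : (1 + w) ^ 2 ≤ 2 * (1 + w ^ 2) := by nlinarith [sq_nonneg (1 - w)]
  have f5 : C * (1 + w) ^ 2 * ((1 + X) * ρ) ≤ 4 * C * ((1 + w ^ 2) * (1 + P)) := by
    have hm := mul_le_mul f4 f3 (by positivity) (by positivity)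
    nlinarith
  have f6 : 4 * C * ((1 + w ^ 2) * (1 + P)) ≤ (4 * C / s) * ((1 + w ^ 2) * (1 + s * P)) := by
    have e : (4 * C / s) * (1 + s * P) = 4 * C / s + 4 * C * P := by field_simp
    have h1 : 4 * C ≤ 4 * C / s := by rw [le_div_iff₀ hs0]; nlinarith
    calc 4 * C * ((1 + w ^ 2) * (1 + P)) = (1 + w ^ 2) * (4 * C + 4 * C * P) := by ring
      _ ≤ (1 + w ^ 2) * (4 * C / s + 4 * C * P) := by nlinarith
      _ = (4 * C / s) * ((1 + w ^ 2) * (1 + s * P)) := by rw [← e]; ring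
  have f7' : (η / 2) * (s * (P * ρ ^ 2)) ≤ (η / 2) * (P * ρ ^ 2) := by
    have h0 : (0:ℝ) ≤ P * ρ ^ 2 := by positivity
    exact mul_le_mul_of_nonneg_left (mul_le_of_le_one_left h0 hs1) (by positivity)
  have f8 : η / 2 ≤ (η / 2) * ((1 + w ^ 2) * (1 + s * P)) := by
    have h2 : (0:ℝ) ≤ s * P := mul_nonneg hs0.le hP0
    have h1 : (1:ℝ) ≤ (1 + w ^ 2) * (1 + s * P) := by nlinarith [sq_nonneg w]
    have := mul_le_mul_of_nonneg_left h1 (by positivity : (0:ℝ) ≤ η / 2)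
    linarith
  linarith [f2', f5, f6, f7', f8, hG]

/-- Each coordinate of the forward pass is differentiable in the parameter θ. -/
lemma mlForward_differentiable (n : ℕ) (dims : ℕ → ℕ) (sact : ℕ → ℝ → ℝ)
    (hsdiff : ∀ i, 1 ≤ i → i ≤ n → ContDiff ℝ 1 (sact i))
    (z : EuclideanSpace ℝ (Fin (dims 0))) :
    ∀ k, k ≤ n → ∀ j : Fin (dims k),
      Differentiable ℝ (fun θ : EuclideanSpace ℝ (NetIdx n dims) =>
        mlForward n dims sact θ z k j) := by
  intro k
  induction k with
  | zero =>
    intro _ j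
    simpa [mlForward] using differentiable_const (z j)
  | succ k ih =>
    intro hk j
    have hkn : k < n := hk
    have heq : (fun θ : EuclideanSpace ℝ (NetIdx n dims) => mlForward n dims sact θ z (k+1) j)
        = fun θ => sact (k + 1)
            (∑ i : Fin (dims k), θ ⟨⟨k, hkn⟩, (j, i)⟩ * mlForward n dims sact θ z k i) := by
      funext θ
      simp [mlForward, hkn]
    rw [heq]
    have hs : Differentiable ℝ (sact (k + 1)) :=
      (hsdiff (k + 1) (Nat.le_add_left 1 k) hk).differentiable one_ne_zero
    exact hs.comp (Differentiable.fun_sum fun i _ =>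
      ((EuclideanSpace.proj (𝕜 := ℝ) (⟨⟨k, hkn⟩, (j, i)⟩ : NetIdx n dims)).differentiable).mul
        (ih (Nat.le_of_succ_le hk) i))

/-- The squared loss is differentiable in the parameter θ. -/
lemma mlLoss_differentiable (n : ℕ) (dims : ℕ → ℕ) (sact : ℕ → ℝ → ℝ)
    (hsdiff : ∀ i, 1 ≤ i → i ≤ n → ContDiff ℝ 1 (sact i))
    (y : EuclideanSpace ℝ (Fin (dims 0) ⊕ Fin (dims n))) :
    Differentiable ℝ (mlLoss n dims sact y) := by
  have heq : mlLoss n dims sact y = fun θ =>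
      ∑ j : Fin (dims n),
        (mlForward n dims sact θ (WithLp.toLp 2 (fun i => y (Sum.inl i))) n j - y (Sum.inr j)) ^ 2 := by
    funext θ
    unfold mlLoss
    rw [EuclideanSpace.norm_eq, Real.sq_sqrt (by positivity)]
    refine Finset.sum_congr rfl fun j _ => ?_
    simp [mlNet, mlLabel, Real.norm_eq_abs, sq_abs]
  rw [heq]
  exact Differentiable.fun_sum fun j _ =>
    ((mlForward_differentiable n dims sact hsdiff _ n le_rfl j).sub_const _).pow 2

/-- from Lemma 6 of the paper: for the tamed scheme applied to the
n-layer network, if r ≥ (n+2)/2 then for λ ∈ (0,1] small enough the tamed updating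
function satisfies the dissipativity condition
⟨H(θ,y), θ⟩ ≥ (η/2)|θ|² − K'(1 + |y|²) for some K' > 0, i.e. Assumption 1 holds with
Δ = η/2 and b(y) quadratic in y. -/
theorem tamed_scheme_dissipativity
    (n : ℕ) (hn : 1 < n) (dims : ℕ → ℕ) (hdims : ∀ i ≤ n, 0 < dims i)
    (sact : ℕ → ℝ → ℝ) (Ms : ℝ)
    (hsdiff : ∀ i, 1 ≤ i → i ≤ n → ContDiff ℝ 1 (sact i))
    (hsbd : ∀ i, 1 ≤ i → i ≤ n → ∀ x, |sact i x| ≤ Ms)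
    (hs'bd : ∀ i, 1 ≤ i → i ≤ n → ∀ x, |deriv (sact i) x| ≤ Ms)
    -- the known polynomial bound on the gradient of the unregularized loss
    (C : ℝ) (hC : 0 < C)
    (hgradbd : ∀ (θ : EuclideanSpace ℝ (NetIdx n dims))
        (y : EuclideanSpace ℝ (Fin (dims 0) ⊕ Fin (dims n))),
        ‖gradient (mlLoss n dims sact y) θ‖ ≤ C * (1 + ‖y‖) ^ 2 * (1 + ‖θ‖ ^ (n + 1)))
    (η : ℝ) (hη : 0 < η) (r : ℝ) (hr : ((n : ℝ) + 2) / 2 ≤ r) :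
    ∃ lam₀ > (0 : ℝ), ∀ lam : ℝ, 0 < lam → lam ≤ lam₀ → lam ≤ 1 →
      ∃ K' > (0 : ℝ),
        ∀ (θ : EuclideanSpace ℝ (NetIdx n dims))
          (y : EuclideanSpace ℝ (Fin (dims 0) ⊕ Fin (dims n))),
          ⟪tamedH n dims sact η r lam θ y, θ⟫
            ≥ (η / 2) * ‖θ‖ ^ 2 - K' * (1 + ‖y‖ ^ 2) := by
  
  refine ⟨1, one_pos, fun lam hlam _ hlam1 => ?_⟩
  set s := Real.sqrt lam with hsdef
  have hs0 : 0 < s := Real.sqrt_pos.2 hlam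
  have hs1 : s ≤ 1 := by
    rw [hsdef, show (1:ℝ) = Real.sqrt 1 by simp]
    exact Real.sqrt_le_sqrt hlam1
  refine ⟨4 * C / s + η / 2, by positivity, fun θ y => ?_⟩
  have hn2 : (2:ℝ) ≤ (n:ℝ) := by exact_mod_cast hn
  have hr2 : (2:ℝ) ≤ r := by
    have h1 : (2:ℝ) ≤ ((n:ℝ) + 2) / 2 := by linarith
    linarith
  have hρ0 : (0:ℝ) ≤ ‖θ‖ := norm_nonneg θ
  have hP0 : (0:ℝ) ≤ ‖θ‖ ^ (2 * r) := Real.rpow_nonneg hρ0 _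
  -- gradient of the regularized loss
  have hr1 : r + 1 ≠ 0 := by linarith
  have hlossdiff : DifferentiableAt ℝ (mlLoss n dims sact y) θ :=
    (mlLoss_differentiable n dims sact hsdiff y) θ
  have hreg := hasGradientAt_rpow_norm (r + 1) (by linarith) θ
  have hregF : HasFDerivAt (fun θ : EuclideanSpace ℝ (NetIdx n dims) => ‖θ‖ ^ (2 * (r + 1)))
      (InnerProductSpace.toDual ℝ _ ((2 * (r+1) * ‖θ‖ ^ (2 * (r+1) - 2)) • θ)) θ :=
    hasGradientAt_iff_hasFDerivAt.1 hreg
  have hregF' := hregF.const_mul (η / (2 * (r + 1)))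
  have hsum : HasFDerivAt (mlRegLoss n dims sact η r y)
      (fderiv ℝ (mlLoss n dims sact y) θ +
        (η / (2 * (r + 1))) • InnerProductSpace.toDual ℝ _
          ((2 * (r+1) * ‖θ‖ ^ (2 * (r+1) - 2)) • θ)) θ := by
    have : mlRegLoss n dims sact η r y = fun θ =>
        mlLoss n dims sact y θ + (η / (2 * (r + 1))) * ‖θ‖ ^ (2 * (r + 1)) := rfl
    rw [this]
    exact hlossdiff.hasFDerivAt.add hregF'
  have hgradU : gradient (mlRegLoss n dims sact η r y) θ
      = gradient (mlLoss n dims sact y) θ + (η * ‖θ‖ ^ (2 * r)) • θ := by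
    unfold gradient
    rw [hsum.fderiv, map_add, map_smul, LinearIsometryEquiv.symm_apply_apply, smul_smul]
    congr 2
    rw [show 2 * (r + 1) - 2 = 2 * r by ring]
    field_simp
  -- the inner product
  have hip : ⟪tamedH n dims sact η r lam θ y, θ⟫
      = (1 + s * ‖θ‖ ^ (2 * r))⁻¹ *
        (⟪gradient (mlLoss n dims sact y) θ, θ⟫ + η * ‖θ‖ ^ (2 * r) * ‖θ‖ ^ 2) := by
    unfold tamedH
    rw [hgradU, real_inner_smul_left, inner_add_left, real_inner_smul_left,
      real_inner_self_eq_norm_sq]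
  have hD : (0:ℝ) < 1 + s * ‖θ‖ ^ (2 * r) := by positivity
  -- Cauchy-Schwarz bound on the loss-gradient term
  have hCS : -(C * (1 + ‖y‖) ^ 2 * (1 + ‖θ‖ ^ (n + 1)) * ‖θ‖)
      ≤ ⟪gradient (mlLoss n dims sact y) θ, θ⟫ := by
    have h1 := abs_real_inner_le_norm (gradient (mlLoss n dims sact y) θ) θ
    have h2 := mul_le_mul_of_nonneg_right (hgradbd θ y) hρ0
    have h3 := neg_abs_le ⟪gradient (mlLoss n dims sact y) θ, θ⟫
    linarith
  rw [hip, ge_iff_le, inv_mul_eq_div, le_div_iff₀ hD]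
  clear hip hsum hgradU hregF hregF' hreg hlossdiff hgradbd hsdiff hsbd hs'bd
  -- scalar facts
  have hρa : ‖θ‖ ≤ 1 + ‖θ‖ ^ (2 * r) := by
    have := rpow_le_one_add_rpow ‖θ‖ hρ0 (a := 1) (b := 2 * r) zero_le_one (by linarith)
    simpa [Real.rpow_one] using this
  have hρb : ‖θ‖ ^ (n + 1) * ‖θ‖ ≤ 1 + ‖θ‖ ^ (2 * r) := by
    have h1 : ‖θ‖ ^ (n + 1) * ‖θ‖ = ‖θ‖ ^ (((n + 2 : ℕ) : ℝ)) := by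
      rw [Real.rpow_natCast]
      ring
    rw [h1]
    exact rpow_le_one_add_rpow ‖θ‖ hρ0 (Nat.cast_nonneg _) (by push_cast; linarith)
  have hρc : ‖θ‖ ^ 2 ≤ 1 + ‖θ‖ ^ (2 * r) * ‖θ‖ ^ 2 := by
    rcases le_or_gt ‖θ‖ 1 with h | h
    · have h1 : ‖θ‖ ^ 2 ≤ 1 := pow_le_one₀ hρ0 h
      nlinarith [mul_nonneg hP0 (sq_nonneg ‖θ‖)]
    · have h1P : (1:ℝ) ≤ ‖θ‖ ^ (2 * r) := Real.one_le_rpow h.le (by linarith)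
      nlinarith [sq_nonneg ‖θ‖]
  exact dissipativity_scalar C η s ‖y‖ ‖θ‖ (‖θ‖ ^ (2 * r)) (‖θ‖ ^ (n + 1)) _
    hC hη hs0 hs1 (norm_nonneg y) hρ0 hP0 (by positivity) hρa hρb hρc hCS
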